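/- For any u, v in the plactic monoid P_n of rank n with equal content, there exists X ∈ P_n such that Xu = Xv. -/

import Mathlib

/-- The Knuth relations on words over the alphabet `Fin n`:
`xzy = zxy` for `x ≤ y < z` and `yxz = yzx` for `x < y ≤ z`. -/
def KnuthRel (n : ℕ) : FreeMonoid (Fin n) → FreeMonoid (Fin n) → Prop := fun a b =>
  (∃ x y z : Fin n, x ≤ y ∧ y < z ∧
      a = FreeMonoid.of x * FreeMonoid.of z * FreeMonoid.of y ∧
      b = FreeMonoid.of z * FreeMonoid.of x * FreeMonoid.of y) ∨
  (∃ x y z : Fin n, x < y ∧ y ≤ z ∧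
      a = FreeMonoid.of y * FreeMonoid.of x * FreeMonoid.of z ∧
      b = FreeMonoid.of y * FreeMonoid.of z * FreeMonoid.of x)

/-- The plactic monoid of rank `n`, presented by generators `Fin n` and the
Knuth relations. -/
def Plactic (n : ℕ) := (conGen (KnuthRel n)).Quotient

instance (n : ℕ) : Monoid (Plactic n) :=
  inferInstanceAs (Monoid (conGen (KnuthRel n)).Quotient)

/-- The canonical projection from the free monoid to the plactic monoid. -/
def Plactic.mk (n : ℕ) : FreeMonoid (Fin n) →* Plactic n := Con.mk' _

namespace PlacticAux

/-- Knuth (plactic) equivalence of words, as lists. -/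
def KL (n : ℕ) (a b : List (Fin n)) : Prop :=
  conGen (KnuthRel n) (FreeMonoid.ofList a) (FreeMonoid.ofList b)

variable {n : ℕ}

theorem KL.refl (a : List (Fin n)) : KL n a a := (conGen (KnuthRel n)).refl _

theorem KL.symm {a b : List (Fin n)} (h : KL n a b) : KL n b a := (conGen (KnuthRel n)).symm h

theorem KL.trans {a b c : List (Fin n)} (h₁ : KL n a b) (h₂ : KL n b c) : KL n a c :=
  (conGen (KnuthRel n)).trans h₁ h₂

theorem KL.appendR {a b : List (Fin n)} (h : KL n a b) (q : List (Fin n)) :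
    KL n (a ++ q) (b ++ q) := by
  have h2 := (conGen (KnuthRel n)).mul h ((conGen (KnuthRel n)).refl (FreeMonoid.ofList q))
  simpa [KL, FreeMonoid.ofList_append] using h2

theorem KL.appendL (p : List (Fin n)) {a b : List (Fin n)} (h : KL n a b) :
    KL n (p ++ a) (p ++ b) := by
  have h2 := (conGen (KnuthRel n)).mul ((conGen (KnuthRel n)).refl (FreeMonoid.ofList p)) h
  simpa [KL, FreeMonoid.ofList_append] using h2

theorem knuth1 {x y z : Fin n} (h1 : x ≤ y) (h2 : y < z) : KL n [x, z, y] [z, x, y] :=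
  ConGen.Rel.of _ _ (Or.inl ⟨x, y, z, h1, h2, rfl, rfl⟩)

theorem knuth2 {x y z : Fin n} (h1 : x < y) (h2 : y ≤ z) : KL n [y, x, z] [y, z, x] :=
  ConGen.Rel.of _ _ (Or.inr ⟨x, y, z, h1, h2, rfl, rfl⟩)

/-- Move a small letter `x` leftwards over a sorted block `B` of large letters,
anchored by `z`. -/
theorem moveLeft {x : Fin n} : ∀ (B : List (Fin n)) {z : Fin n}, x < z →
    B.Pairwise (· ≤ ·) → (∀ b ∈ B, z ≤ b) → KL n (z :: (B ++ [x])) (z :: x :: B) := by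
  intro B
  induction B with
  | nil => intro z _ _ _; exact KL.refl _
  | cons b B' ih =>
    intro z hxz hB hzB
    have hzb : z ≤ b := hzB b (List.mem_cons_self)
    have hB' := List.pairwise_cons.mp hB
    have h1 : KL n (b :: (B' ++ [x])) (b :: x :: B') :=
      ih (lt_of_lt_of_le hxz hzb) hB'.2 hB'.1
    have h2 : KL n (z :: b :: (B' ++ [x])) (z :: b :: x :: B') := KL.appendL [z] h1
    have h3 : KL n ([z, b, x] ++ B') ([z, x, b] ++ B') := (knuth2 hxz hzb).symm.appendR B'
    exact h2.trans h3
  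
/-- Move a large letter `z` leftwards over a sorted block `A` of small letters. -/
theorem moveZ {x z : Fin n} (hxz : x < z) : ∀ (A : List (Fin n)),
    A.Pairwise (· ≤ ·) → (∀ a ∈ A, a ≤ x) → KL n (A ++ [z, x]) (z :: (A ++ [x])) := by
  intro A
  induction A with
  | nil => intro _ _; exact KL.refl _
  | cons a A' ih =>
    intro hA hAx
    have hA' := List.pairwise_cons.mp hA
    have h1 : KL n (A' ++ [z, x]) (z :: (A' ++ [x])) :=
      ih hA'.2 (fun a' ha' => hAx a' (List.mem_cons_of_mem _ ha'))
    have h2 : KL n (a :: (A' ++ [z, x])) (a :: z :: (A' ++ [x])) := KL.appendL [a] h1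
    match A' with
    | [] =>
      have h3 : KL n [a, z, x] [z, a, x] := knuth1 (hAx a (List.mem_cons_self)) hxz
      exact h2.trans h3
    | y :: A'' =>
      have hay : a ≤ y := hA'.1 y (List.mem_cons_self)
      have hyz : y < z :=
        lt_of_le_of_lt (hAx y (List.mem_cons_of_mem _ (List.mem_cons_self))) hxz
      have h3 : KL n ([a, z, y] ++ (A'' ++ [x])) ([z, a, y] ++ (A'' ++ [x])) :=
        (knuth1 hay hyz).appendR (A'' ++ [x])
      exact h2.trans h3

/-- The row bumping relation: inserting `x` into the sorted row `A ++ z :: B`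
(`A` the letters `≤ x`, `z` the first letter `> x`) bumps out `z`. -/
theorem bump {x z : Fin n} (hxz : x < z) (A B : List (Fin n))
    (hA : A.Pairwise (· ≤ ·)) (hAx : ∀ a ∈ A, a ≤ x)
    (hB : B.Pairwise (· ≤ ·)) (hzB : ∀ b ∈ B, z ≤ b) :
    KL n ((A ++ z :: B) ++ [x]) (z :: (A ++ x :: B)) := by
  have h1 : KL n (A ++ (z :: (B ++ [x]))) (A ++ (z :: x :: B)) :=
    KL.appendL A (moveLeft B hxz hB hzB)
  have h2 : KL n ((A ++ [z, x]) ++ B) ((z :: (A ++ [x])) ++ B) :=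
    (moveZ hxz A hA hAx).appendR B
  exact KL.trans (by simpa using h1) (by simpa using h2)

/-- The sorted word, over alphabet `Fin n`, with `c j` copies of letter `j`,
for `j` ranging over the interval `[a, a+l)`. -/
def rwseg (n : ℕ) (c : ℕ → ℕ) : ℕ → ℕ → List (Fin n)
  | _, 0 => []
  | a, l + 1 =>
    (if h : a < n then List.replicate (c a) (⟨a, h⟩ : Fin n) else []) ++ rwseg n c (a + 1) l

theorem rwseg_congr (c c' : ℕ → ℕ) : ∀ (l a : ℕ),
    (∀ j, a ≤ j → j < a + l → c j = c' j) → rwseg n c a l = rwseg n c' a l := by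
  intro l
  induction l with
  | zero => intro a _; rfl
  | succ l ih =>
    intro a h
    simp only [rwseg]
    rw [h a le_rfl (by omega), ih (a + 1) (fun j h1 h2 => h j (by omega) (by omega))]

theorem rwseg_split (c : ℕ → ℕ) : ∀ (l₁ l₂ a : ℕ),
    rwseg n c a (l₁ + l₂) = rwseg n c a l₁ ++ rwseg n c (a + l₁) l₂ := by
  intro l₁
  induction l₁ with
  | zero => intro l₂ a; simp [rwseg]
  | succ l ih =>
    intro l₂ a
    have e : l + 1 + l₂ = (l + l₂) + 1 := by omega
    rw [e]
    simp only [rwseg]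
    rw [ih l₂ (a + 1), show a + 1 + l = a + (l + 1) from by omega, List.append_assoc]

theorem mem_rwseg (c : ℕ → ℕ) : ∀ (l a : ℕ) (b : Fin n),
    b ∈ rwseg n c a l → a ≤ (b : ℕ) ∧ (b : ℕ) < a + l := by
  intro l
  induction l with
  | zero => intro a b hb; simp [rwseg] at hb
  | succ l ih =>
    intro a b hb
    simp only [rwseg, List.mem_append] at hb
    rcases hb with hb | hb
    · split at hb
      · have hv : (b : ℕ) = a := by simp [List.eq_of_mem_replicate hb]
        omega
      · simp at hb
    · have := ih (a + 1) b hb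
      omega

theorem pairwise_replicate' (m : ℕ) (a : Fin n) :
    (List.replicate m a).Pairwise (· ≤ ·) := by
  induction m with
  | zero => simp
  | succ m ih =>
    rw [List.replicate_succ]
    refine List.pairwise_cons.mpr ⟨fun b hb => ?_, ih⟩
    rw [List.eq_of_mem_replicate hb]

theorem pairwise_rwseg (c : ℕ → ℕ) : ∀ (l a : ℕ), (rwseg n c a l).Pairwise (· ≤ ·) := by
  intro l
  induction l with
  | zero => intro a; simp [rwseg]
  | succ l ih =>
    intro a
    simp only [rwseg]
    refine List.pairwise_append.mpr ⟨?_, ih (a + 1), ?_⟩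
    · split
      · exact pairwise_replicate' _ _
      · simp
    · intro p hp q hq
      have hq' := mem_rwseg c l (a + 1) q hq
      split at hp
      · have hv : (p : ℕ) = a := by simp [List.eq_of_mem_replicate hp]
        show (p : ℕ) ≤ (q : ℕ)
        omega
      · simp at hp

/-- The reading word of one row: `c j` copies of each letter `j < n`, ascending. -/
def rw (n : ℕ) (c : ℕ → ℕ) : List (Fin n) := rwseg n c 0 n

theorem rw_congr {c c' : ℕ → ℕ} (h : ∀ j < n, c j = c' j) : rw n c = rw n c' :=
  rwseg_congr c c' n 0 (fun j _ h2 => h j (by omega))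

/-- Bumping a letter `x` through a full row whose multiplicities are given by `c`:
the letter `x+1` is bumped out and the row gains an `x`, losing an `x+1`. -/
theorem rwseg_one (c : ℕ → ℕ) (a : ℕ) (ha : a < n) :
    rwseg n c a 1 = List.replicate (c a) (⟨a, ha⟩ : Fin n) := by
  simp [rwseg, dif_pos ha]

/-- Bumping a letter `x` through a full row whose multiplicities are given by `c`:
the letter `x+1` is bumped out and the row gains an `x`, losing an `x+1`. -/
theorem rw_bump (c : ℕ → ℕ) (x : ℕ) (hx : x + 1 < n) (hc : 1 ≤ c (x + 1)) (c' : ℕ → ℕ)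
    (hc' : ∀ j < n, c' j = if j = x then c j + 1 else if j = x + 1 then c j - 1 else c j) :
    KL n (rw n c ++ [⟨x, by omega⟩]) ((⟨x + 1, hx⟩ : Fin n) :: rw n c') := by
  obtain ⟨m, hm⟩ : ∃ m, c (x + 1) = m + 1 := ⟨c (x + 1) - 1, by omega⟩
  set z : Fin n := ⟨x + 1, hx⟩ with hz
  set xf : Fin n := (⟨x, by omega⟩ : Fin n) with hxf
  set A : List (Fin n) := rwseg n c 0 (x + 1) with hA
  set B : List (Fin n) :=
    List.replicate m z ++ rwseg n c (x + 2) (n - (x + 2)) with hB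
  -- split the row
  have hsplit : rw n c = A ++ z :: B := by
    show rwseg n c 0 n = _
    rw [congrArg (rwseg n c 0) (show n = (x + 1) + (n - (x + 1)) from by omega),
      rwseg_split c (x + 1) (n - (x + 1)) 0]
    simp only [Nat.zero_add]
    rw [← hA]
    congr 1
    rw [congrArg (rwseg n c (x + 1)) (show n - (x + 1) = (n - (x + 2)) + 1 from by omega)]
    show rwseg n c (x + 1) ((n - (x + 2)) + 1) = _
    simp only [rwseg, dif_pos hx]
    rw [hm, List.replicate_succ]
    simp [hB, hz]
  have hAx : ∀ a ∈ A, a ≤ xf := by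
    intro a ha
    have := mem_rwseg c (x + 1) 0 a ha
    show (a : ℕ) ≤ (xf : ℕ)
    simp only [hxf]
    omega
  have hzB : ∀ b ∈ B, z ≤ b := by
    intro b hb
    rw [hB, List.mem_append] at hb
    rcases hb with hb | hb
    · rw [List.eq_of_mem_replicate hb]
    · have := mem_rwseg c (n - (x + 2)) (x + 2) b hb
      show (z : ℕ) ≤ (b : ℕ)
      simp only [hz]
      omega
  have hBp : B.Pairwise (· ≤ ·) := by
    rw [hB]
    refine List.pairwise_append.mpr ⟨pairwise_replicate' _ _, pairwise_rwseg c _ _, ?_⟩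
    intro p hp q hq
    rw [List.eq_of_mem_replicate hp]
    have := mem_rwseg c (n - (x + 2)) (x + 2) q hq
    show (z : ℕ) ≤ (q : ℕ)
    simp only [hz]
    omega
  have hxz : xf < z := by
    show (xf : ℕ) < (z : ℕ)
    simp only [hz, hxf]
    omega
  have main := bump hxz A B (pairwise_rwseg c _ _) hAx hBp hzB
  -- identify the updated row
  have hrow : rw n c' = A ++ xf :: B := by
    show rwseg n c' 0 n = _
    rw [congrArg (rwseg n c' 0) (show n = (x + 1) + (n - (x + 1)) from by omega),
      rwseg_split c' (x + 1) (n - (x + 1)) 0]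
    simp only [Nat.zero_add]
    have part1 : rwseg n c' 0 (x + 1) = A ++ [xf] := by
      rw [rwseg_split c' x 1 0, hA, rwseg_split c x 1 0]
      simp only [Nat.zero_add]
      have e1 : rwseg n c' 0 x = rwseg n c 0 x := by
        apply rwseg_congr
        intro j h1 h2
        rw [hc' j (by omega), if_neg (by omega), if_neg (by omega)]
      have hxn : x < n := by omega
      rw [e1, rwseg_one c' x hxn, rwseg_one c x hxn, List.append_assoc]
      congr 1
      rw [hc' x hxn, if_pos rfl, List.replicate_succ']
    have part2 : rwseg n c' (x + 1) (n - (x + 1)) = B := by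
      rw [congrArg (rwseg n c' (x + 1)) (show n - (x + 1) = (n - (x + 2)) + 1 from by omega)]
      show rwseg n c' (x + 1) ((n - (x + 2)) + 1) = _
      simp only [rwseg, dif_pos hx]
      rw [hc' (x + 1) hx, if_neg (by omega), if_pos rfl, hm]
      rw [hB, show m + 1 - 1 = m from rfl]
      congr 1
      apply rwseg_congr
      intro j h1 h2
      rw [hc' j (by omega), if_neg (by omega), if_neg (by omega)]
    rw [part1, part2]
    simp
  rw [hsplit, hrow]
  exact (by simpa using main : KL n (A ++ z :: B ++ [xf]) (z :: (A ++ xf :: B)))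

/-- Appending the largest letter `n-1` to a row just extends the row. -/
theorem rw_top (c : ℕ → ℕ) (x : ℕ) (hx : x + 1 = n) (c' : ℕ → ℕ)
    (hc' : ∀ j < n, c' j = if j = x then c j + 1 else c j) :
    rw n c ++ [⟨x, by omega⟩] = rw n c' := by
  have hxn : x < n := by omega
  show rwseg n c 0 n ++ _ = rwseg n c' 0 n
  rw [congrArg (rwseg n c 0) (show n = x + 1 from by omega),
    congrArg (rwseg n c' 0) (show n = x + 1 from by omega)]
  rw [rwseg_split c x 1 0, rwseg_split c' x 1 0]
  simp only [Nat.zero_add]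
  have e1 : rwseg n c' 0 x = rwseg n c 0 x := by
    apply rwseg_congr
    intro j h1 h2
    rw [hc' j (by omega), if_neg (by omega)]
  rw [e1, rwseg_one c x hxn, rwseg_one c' x hxn, List.append_assoc]
  congr 1
  rw [hc' x hxn, if_pos rfl, List.replicate_succ']

/-- The reading word of the bottom `i` rows of a tableau with multiplicities `c`
(row `i-1` first, then down to row `0`). -/
def stack (n : ℕ) (c : ℕ → ℕ → ℕ) : ℕ → List (Fin n)
  | 0 => []
  | i + 1 => rw n (c i) ++ stack n c i

theorem stack_congr {c c' : ℕ → ℕ → ℕ} : ∀ i : ℕ, (∀ i' < i, ∀ j < n, c i' j = c' i' j) →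
    stack n c i = stack n c' i := by
  intro i
  induction i with
  | zero => intro _; rfl
  | succ i ih =>
    intro h
    simp only [stack]
    rw [rw_congr (fun j hj => h i (by omega) j hj), ih (fun i' h1 j h2 => h i' (by omega) j h2)]

/-- Result of (Schensted) inserting letter `k` into the fat tableau `c`:
row `i` gains a `k+i` and loses a `k+i+1`. -/
def ins (n k : ℕ) (c : ℕ → ℕ → ℕ) : ℕ → ℕ → ℕ := fun i j =>
  if j = k + i ∧ j < n then c i j + 1 else if j = k + i + 1 ∧ j < n then c i j - 1 else c i j

/-- All above-diagonal multiplicities are at least `m`. -/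
def Good (n m : ℕ) (c : ℕ → ℕ → ℕ) : Prop := ∀ i j, i < j → j < n → m ≤ c i j

theorem Good.mono {m m' : ℕ} {c : ℕ → ℕ → ℕ} (h : Good n m c) (hm : m' ≤ m) : Good n m' c :=
  fun i j h1 h2 => le_trans hm (h i j h1 h2)

theorem good_ins {m : ℕ} {c : ℕ → ℕ → ℕ} (h : Good n (m + 1) c) (k : ℕ) :
    Good n m (ins n k c) := by
  intro i j h1 h2
  have := h i j h1 h2
  unfold ins
  split_ifs <;> omega

theorem ins_comm {c : ℕ → ℕ → ℕ} (hG : Good n 1 c) (a b : ℕ) :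
    ∀ i' < (n : ℕ) + (n : ℕ), ∀ j < n, ins n a (ins n b c) i' j = ins n b (ins n a c) i' j := by
  intro i _ j hj
  rcases Nat.lt_or_ge i j with hij | hij
  · have h1 := hG i j hij hj
    unfold ins
    split_ifs <;> omega
  · unfold ins
    split_ifs <;> omega

/-- The key insertion lemma: appending letter `k` to the reading word of the
bottom `i` rows is Knuth-equivalent to performing the insertion within these
rows, possibly emitting the letter `k+i` out of the top. -/
theorem stack_ins (k : ℕ) (hk : k < n) (c : ℕ → ℕ → ℕ) (hG : Good n 1 c) :
    ∀ i : ℕ, KL n (stack n c i ++ [⟨k, hk⟩])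
      ((if h : k + i < n then [(⟨k + i, h⟩ : Fin n)] else []) ++ stack n (ins n k c) i) := by
  intro i
  induction i with
  | zero =>
    rw [dif_pos (by omega : k + 0 < n)]
    exact KL.refl _
  | succ i ih =>
    have step0 : KL n (stack n c (i + 1) ++ [⟨k, hk⟩])
        (rw n (c i) ++ ((if h : k + i < n then [(⟨k + i, h⟩ : Fin n)] else []) ++
          stack n (ins n k c) i)) := by
      have := ih.appendL (rw n (c i))
      simpa [stack, List.append_assoc] using this
    by_cases hki : k + i < n
    · rw [dif_pos hki] at step0
      by_cases hki1 : k + i + 1 < n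
      · -- bump within row i
        have hcpos : 1 ≤ c i (k + i + 1) := hG i (k + i + 1) (by omega) hki1
        have hrow : ∀ j < n, ins n k c i j =
            if j = k + i then c i j + 1 else if j = k + i + 1 then c i j - 1 else c i j := by
          intro j hj
          unfold ins
          split_ifs <;> omega
        have hbump := rw_bump (c i) (k + i) hki1 hcpos (ins n k c i) hrow
        have hbump' := (hbump.appendR (stack n (ins n k c) i)).appendL [] |>.appendL []
        have step1 : KL n (rw n (c i) ++ ([(⟨k + i, hki⟩ : Fin n)] ++ stack n (ins n k c) i))
            ((⟨k + i + 1, hki1⟩ : Fin n) :: (rw n (ins n k c i) ++ stack n (ins n k c) i)) := by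
          have := hbump.appendR (stack n (ins n k c) i)
          simpa [List.append_assoc] using this
        have goalshape : KL n (stack n c (i + 1) ++ [⟨k, hk⟩])
            ((⟨k + i + 1, hki1⟩ : Fin n) :: stack n (ins n k c) (i + 1)) :=
          step0.trans (by simpa [stack] using step1)
        rw [dif_pos (show k + (i + 1) < n by omega)]
        simpa [stack, Nat.add_assoc] using goalshape
      · -- append at the top of the bump chain: k + i = n - 1
        have hrow : ∀ j < n, ins n k c i j = if j = k + i then c i j + 1 else c i j := by
          intro j hj
          unfold ins
          split_ifs <;> omega
        have htop := rw_top (c i) (k + i) (by omega) (ins n k c i) hrow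
        rw [dif_neg (show ¬ k + (i + 1) < n by omega)]
        refine step0.trans ?_
        have e : rw n (c i) ++ ([(⟨k + i, hki⟩ : Fin n)] ++ stack n (ins n k c) i)
            = stack n (ins n k c) (i + 1) := by
          simp only [stack, ← htop]
          simp [List.append_assoc]
        rw [e]
        exact KL.refl _
    · -- chain already finished below row i
      rw [dif_neg hki] at step0
      rw [dif_neg (show ¬ k + (i + 1) < n by omega)]
      refine step0.trans ?_
      have e : rw n (c i) = rw n (ins n k c i) := by
        apply rw_congr
        intro j hj
        unfold ins
        rw [if_neg (by omega), if_neg (by omega)]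
      simp only [List.nil_append, stack, ← e]
      exact KL.refl _

/-- Inserting a letter into the whole (tall enough) stack. -/
theorem word_ins (c : ℕ → ℕ → ℕ) (hG : Good n 1 c) (k : Fin n) :
    KL n (stack n c n ++ [k]) (stack n (ins n (k : ℕ) c) n) := by
  have h := stack_ins (k : ℕ) k.isLt c hG n
  rw [dif_neg (by omega)] at h
  simpa using h

/-- Two words which are permutations of one another become Knuth-equivalent
after a sufficiently "fat" stack word. -/
theorem perm_append (u v : List (Fin n)) (hp : u.Perm v) :
    ∀ c : ℕ → ℕ → ℕ, Good n (u.length + 1) c →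
      KL n (stack n c n ++ u) (stack n c n ++ v) := by
  induction hp with
  | nil => intro c _; exact KL.refl _
  | cons x hp' ih =>
    rename_i u' v'
    intro c hG
    have hG1 : Good n 1 c := hG.mono (by omega)
    have h1 := (word_ins c hG1 x).appendR u'
    have h2 := (word_ins c hG1 x).appendR v'
    have h3 := ih (ins n (x : ℕ) c) (by
      have : Good n (u'.length + 1) (ins n (x : ℕ) c) := (good_ins (by
        simpa using hG) _)
      exact this)
    have e1 : (stack n c n ++ [x]) ++ u' = stack n c n ++ (x :: u') := by simp
    have e2 : (stack n c n ++ [x]) ++ v' = stack n c n ++ (x :: v') := by simp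
    rw [e1] at h1; rw [e2] at h2
    exact (h1.trans h3).trans h2.symm
  | swap x y l =>
    intro c hG
    have hG1 : Good n 1 c := hG.mono (by omega)
    have hG2y : Good n 1 (ins n (y : ℕ) c) := by
      have : Good n 2 c := hG.mono (by simp only [List.length_cons]; omega)
      exact good_ins (by simpa using this) _
    have hG2x : Good n 1 (ins n (x : ℕ) c) := by
      have : Good n 2 c := hG.mono (by simp only [List.length_cons]; omega)
      exact good_ins (by simpa using this) _
    have a1 := (word_ins c hG1 y).appendR (x :: l)
    have a2 := (word_ins (ins n (y : ℕ) c) hG2y x).appendR l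
    have b1 := (word_ins c hG1 x).appendR (y :: l)
    have b2 := (word_ins (ins n (x : ℕ) c) hG2x y).appendR l
    have hcomm : stack n (ins n (x : ℕ) (ins n (y : ℕ) c)) n
        = stack n (ins n (y : ℕ) (ins n (x : ℕ) c)) n :=
      stack_congr n (fun i' hi' j hj => ins_comm hG1 (x : ℕ) (y : ℕ) i' (by omega) j hj)
    have e1 : (stack n c n ++ [y]) ++ (x :: l) = stack n c n ++ (y :: x :: l) := by simp
    have e2 : (stack n (ins n (y : ℕ) c) n ++ [x]) ++ l
        = stack n (ins n (y : ℕ) c) n ++ (x :: l) := by simp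
    have e3 : (stack n c n ++ [x]) ++ (y :: l) = stack n c n ++ (x :: y :: l) := by simp
    have e4 : (stack n (ins n (x : ℕ) c) n ++ [y]) ++ l
        = stack n (ins n (x : ℕ) c) n ++ (y :: l) := by simp
    rw [e1] at a1; rw [e2] at a2; rw [e3] at b1; rw [e4] at b2
    rw [hcomm] at a2
    exact ((a1.trans a2).trans b2.symm).trans b1.symm
  | trans hp1 hp2 ih1 ih2 =>
    rename_i u' w' v' 
    intro c hG
    have hlen : u'.length = w'.length := hp1.length_eq
    exact (ih1 c hG).trans (ih2 c (by rwa [← hlen]))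

end PlacticAux

/-- For any `u, v` in the plactic monoid of rank `n` with equal content, there
exists `X` with `X * u = X * v`. -/
theorem plactic_eq_content_imp_common_left_annihilator (n : ℕ) (u v : FreeMonoid (Fin n))
    (h : ∀ k : Fin n, (FreeMonoid.toList u).count k = (FreeMonoid.toList v).count k) :
    ∃ X : Plactic n, X * Plactic.mk n u = X * Plactic.mk n v := by
  classical
  have hperm : (FreeMonoid.toList u).Perm (FreeMonoid.toList v) :=
    List.perm_iff_count.mpr (fun a => h a)
  set c₀ : ℕ → ℕ → ℕ := fun _ _ => (FreeMonoid.toList u).length + 1 with hc₀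
  have hG : PlacticAux.Good n ((FreeMonoid.toList u).length + 1) c₀ :=
    fun i j _ _ => le_refl _
  have key := PlacticAux.perm_append (FreeMonoid.toList u) (FreeMonoid.toList v) hperm c₀ hG
  refine ⟨Plactic.mk n (FreeMonoid.ofList (PlacticAux.stack n c₀ n)), ?_⟩
  have e1 : Plactic.mk n (FreeMonoid.ofList (PlacticAux.stack n c₀ n)) * Plactic.mk n u
      = Plactic.mk n (FreeMonoid.ofList (PlacticAux.stack n c₀ n ++ FreeMonoid.toList u)) := by
    rw [FreeMonoid.ofList_append, FreeMonoid.ofList_toList, map_mul]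
  have e2 : Plactic.mk n (FreeMonoid.ofList (PlacticAux.stack n c₀ n)) * Plactic.mk n v
      = Plactic.mk n (FreeMonoid.ofList (PlacticAux.stack n c₀ n ++ FreeMonoid.toList v)) := by
    rw [FreeMonoid.ofList_append, FreeMonoid.ofList_toList, map_mul]
  rw [e1, e2]
  exact (Con.eq _).mpr key
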